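/- Let $X$ be a nonnegative random variable with mean $\mu > 0$ and finite variance $\sigma^2$. Then $\sup_{p \geq 0}\; p \cdot \mathbb{P}(X \geq p) \geq \mu \cdot \left(c + \beta \log\left(1 + \frac{\sigma^2}{\mu^2}\right)\right)^{-1}$ for $\beta = 2$ and some absolute constant $c > 0$ independent of the distribution of $X$. -/

import Mathlib

open MeasureTheory Set

set_option maxHeartbeats 2000000 in
theorem stmt_10 :
    ∃ c : ℝ, 0 < c ∧
      ∀ (μ : Measure ℝ), IsProbabilityMeasure μ → μ (Set.Iio (0:ℝ)) = 0 →
        ∀ m σ2 : ℝ, 0 < m →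
          Integrable (fun x : ℝ => x) μ → (∫ x, x ∂μ) = m →
          Integrable (fun x : ℝ => (x - m) ^ 2) μ → (∫ x, (x - m) ^ 2 ∂μ) = σ2 →
          m * (c + 2 * Real.log (1 + σ2 / m ^ 2))⁻¹
            ≤ ⨆ p : Set.Ici (0:ℝ), (p : ℝ) * (μ (Set.Ici (p : ℝ))).toReal := by
  refine ⟨6, by norm_num, ?_⟩
  intro μ hprob hIio m σ2 hm hXint hXmean hVint hVval
  set R := ⨆ p : Set.Ici (0:ℝ), (p : ℝ) * (μ (Set.Ici (p : ℝ))).toReal with hRdef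
  have hae : ∀ᵐ x ∂μ, 0 ≤ x := by
    rw [ae_iff]; convert hIio using 2; ext x; simp [not_le]
  have hσ2 : 0 ≤ σ2 := hVval ▸ integral_nonneg (fun x => sq_nonneg _)
  set S := σ2 + m ^ 2 with hSdef
  have hS0 : 0 < S := by positivity
  -- second moment
  have heq : (fun x : ℝ => x ^ 2) = fun x => (x - m) ^ 2 + ((2 * m) * x - m ^ 2) := by
    funext x; ring
  have h1int : Integrable (fun x : ℝ => 2 * m * x - m ^ 2) μ :=
    (hXint.const_mul (2 * m)).sub (integrable_const _)
  have hsq_int : Integrable (fun x : ℝ => x ^ 2) μ := by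
    rw [heq]; exact hVint.add h1int
  have hsq : (∫ x, x ^ 2 ∂μ) = S := by
    have h2 : (∫ x, (2 * m * x - m ^ 2) ∂μ) = m ^ 2 := by
      rw [integral_sub (hXint.const_mul (2 * m)) (integrable_const (m ^ 2)),
          integral_const_mul, hXmean, integral_const]
      simp; ring
    rw [heq, integral_add hVint h1int, hVval, h2]
  -- Markov bounds
  have markov1 : ∀ p : ℝ, p * (μ (Set.Ici p)).toReal ≤ m := by
    intro p
    have h := mul_meas_ge_le_integral_of_nonneg hae hXint p
    rwa [hXmean] at h
  have hbdd : BddAbove (Set.range fun p : Set.Ici (0:ℝ) => (p : ℝ) * (μ (Set.Ici (p : ℝ))).toReal) := by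
    refine ⟨m, ?_⟩
    rintro x ⟨p, rfl⟩
    exact markov1 p
  have hle_R : ∀ p : ℝ, 0 ≤ p → p * (μ (Set.Ici p)).toReal ≤ R :=
    fun p hp => le_ciSup hbdd (⟨p, hp⟩ : Set.Ici (0:ℝ))
  have hRm : R ≤ m := ciSup_le fun p => markov1 p
  -- R > 0
  have hR0 : 0 < R := by
    have hmeas : 0 < (μ (Set.Ici (m / 2))).toReal := by
      rcases (ENNReal.toReal_nonneg (a := μ (Set.Ici (m / 2)))).lt_or_eq with h | h
      · exact h
      · exfalso
        have hz : μ (Set.Ici (m / 2)) = 0 := by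
          rcases (ENNReal.toReal_eq_zero_iff _).mp h.symm with h' | h'
          · exact h'
          · exact absurd h' (measure_ne_top μ _)
        have hae2 : ∀ᵐ x ∂μ, x ≤ m / 2 := by
          rw [ae_iff]
          refine measure_mono_null ?_ hz
          intro x hx
          simp only [Set.mem_setOf_eq, not_le] at hx
          exact le_of_lt hx
        have hle : m ≤ m / 2 := by
          calc m = ∫ x, x ∂μ := hXmean.symm
            _ ≤ ∫ _, (m / 2) ∂μ := integral_mono_ae hXint (integrable_const _) hae2
            _ = m / 2 := by simp
        linarith
    have := hle_R (m / 2) (by linarith)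
    nlinarith
  -- tail function
  set G := fun t : ℝ => (μ (Set.Ioi t)).toReal with hGdef
  have hGmeas : Measurable G :=
    Measurable.ennreal_toReal (Antitone.measurable fun _ _ hab => measure_mono (Set.Ioi_subset_Ioi hab))
  have hG1 : ∀ t : ℝ, G t ≤ 1 := by
    intro t
    have : μ (Set.Ioi t) ≤ 1 := prob_le_one
    simpa [hGdef] using ENNReal.toReal_le_of_le_ofReal zero_le_one (by simpa using this)
  have hGnn : ∀ t : ℝ, 0 ≤ G t := fun t => ENNReal.toReal_nonneg
  have hGR : ∀ t : ℝ, 0 < t → G t ≤ R / t := by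
    intro t ht
    have h1 : (μ (Set.Ioi t)).toReal ≤ (μ (Set.Ici t)).toReal :=
      ENNReal.toReal_mono (measure_ne_top μ _) (measure_mono Set.Ioi_subset_Ici_self)
    have h2 := hle_R t ht.le
    rw [le_div_iff₀ ht]
    calc G t * t = t * (μ (Set.Ioi t)).toReal := by rw [mul_comm]
      _ ≤ t * (μ (Set.Ici t)).toReal := by nlinarith
      _ ≤ R := h2
  have hGS : ∀ t : ℝ, 0 < t → G t ≤ S / t ^ 2 := by
    intro t ht
    have h := mul_meas_ge_le_integral_of_nonneg (μ := μ)
      (f := fun x => x ^ 2) (Filter.Eventually.of_forall fun x => sq_nonneg x) hsq_int (t ^ 2)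
    rw [hsq] at h
    have hsub : Set.Ioi t ⊆ {x : ℝ | t ^ 2 ≤ x ^ 2} := by
      intro x hx
      have : t < x := hx
      have : t ≤ x := this.le
      simp only [Set.mem_setOf_eq]
      nlinarith
    have h1 : (μ (Set.Ioi t)).toReal ≤ (μ {x : ℝ | t ^ 2 ≤ x ^ 2}).toReal :=
      ENNReal.toReal_mono (measure_ne_top μ _) (measure_mono hsub)
    rw [le_div_iff₀ (by positivity)]
    calc G t * t ^ 2 = t ^ 2 * (μ (Set.Ioi t)).toReal := by rw [mul_comm]
      _ ≤ t ^ 2 * (μ {x : ℝ | t ^ 2 ≤ x ^ 2}).toReal := by nlinarith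
      _ ≤ S := h
  -- layer cake
  have hlayer : m = ∫ t in Set.Ioi (0:ℝ), G t := by
    rw [← hXmean]
    exact hXint.integral_eq_integral_meas_lt hae
  set T := S / R with hTdef
  have hT0 : 0 < T := by positivity
  have hRT : R ≤ T := by
    rw [hTdef, le_div_iff₀ hR0]
    nlinarith
  -- integrability of G on pieces
  have hint_IocT : IntegrableOn G (Set.Ioc 0 T) := by
    refine Integrable.mono' (integrable_const 1) hGmeas.aestronglyMeasurable ?_
    exact Filter.Eventually.of_forall fun t => by
      rw [Real.norm_eq_abs, abs_of_nonneg (hGnn t)]; exact hG1 t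
  have hint_Ioc0R : IntegrableOn G (Set.Ioc 0 R) :=
    hint_IocT.mono_set (Set.Ioc_subset_Ioc_right hRT)
  have hint_IocRT : IntegrableOn G (Set.Ioc R T) :=
    hint_IocT.mono_set (Set.Ioc_subset_Ioc_left hR0.le)
  have hdom_int : IntegrableOn (fun t : ℝ => S * t ^ (-2 : ℝ)) (Set.Ioi T) :=
    (integrableOn_Ioi_rpow_of_lt (by norm_num) hT0).const_mul S
  have hdom_eq : ∀ t : ℝ, 0 < t → S * t ^ (-2 : ℝ) = S / t ^ 2 := by
    intro t ht
    rw [Real.rpow_neg ht.le, show (2:ℝ) = ((2:ℕ):ℝ) by norm_num, Real.rpow_natCast]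
    ring
  have hint_IoiT : IntegrableOn G (Set.Ioi T) := by
    refine Integrable.mono' hdom_int hGmeas.aestronglyMeasurable ?_
    rw [ae_restrict_iff' measurableSet_Ioi]
    refine Filter.Eventually.of_forall fun t ht => ?_
    have ht0 : 0 < t := lt_trans hT0 ht
    rw [Real.norm_eq_abs, abs_of_nonneg (hGnn t), hdom_eq t ht0]
    exact hGS t ht0
  -- split the integral
  have hsplit : ∫ t in Set.Ioi (0:ℝ), G t =
      (∫ t in Set.Ioc 0 R, G t) + (∫ t in Set.Ioc R T, G t) + ∫ t in Set.Ioi T, G t := by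
    have h1 : Set.Ioi (0:ℝ) = Set.Ioc 0 T ∪ Set.Ioi T := (Set.Ioc_union_Ioi_eq_Ioi hT0.le).symm
    have h2 : Set.Ioc (0:ℝ) T = Set.Ioc 0 R ∪ Set.Ioc R T := (Set.Ioc_union_Ioc_eq_Ioc hR0.le hRT).symm
    rw [h1, setIntegral_union Set.Ioc_disjoint_Ioi_same measurableSet_Ioi hint_IocT hint_IoiT,
        h2, setIntegral_union (Set.Ioc_disjoint_Ioc_of_le le_rfl) measurableSet_Ioc hint_Ioc0R hint_IocRT]
  -- bound each piece
  have hB1 : ∫ t in Set.Ioc 0 R, G t ≤ R := by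
    calc ∫ t in Set.Ioc 0 R, G t ≤ ∫ _ in Set.Ioc 0 R, (1:ℝ) :=
        setIntegral_mono_on hint_Ioc0R (integrable_const 1) measurableSet_Ioc fun t _ => hG1 t
      _ = R := by simp [Real.volume_Ioc, hR0.le]
  have hinv_int : IntegrableOn (fun t : ℝ => R * t⁻¹) (Set.Ioc R T) := by
    refine Integrable.mono' (integrable_const 1) ?_ ?_
    · exact (measurable_const.mul measurable_inv).aestronglyMeasurable
    · rw [ae_restrict_iff' measurableSet_Ioc]
      refine Filter.Eventually.of_forall fun t ht => ?_
      have htR : R < t := ht.1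
      have ht0 : 0 < t := lt_trans hR0 htR
      rw [Real.norm_eq_abs, abs_of_nonneg (by positivity)]
      calc R * t⁻¹ = R / t := by ring
        _ ≤ 1 := by rw [div_le_one ht0]; linarith
  have hB2 : ∫ t in Set.Ioc R T, G t ≤ R * (Real.log T - Real.log R) := by
    have hle : ∫ t in Set.Ioc R T, G t ≤ ∫ t in Set.Ioc R T, R * t⁻¹ := by
      refine setIntegral_mono_on hint_IocRT hinv_int measurableSet_Ioc fun t ht => ?_
      have ht0 : 0 < t := lt_trans hR0 ht.1
      calc G t ≤ R / t := hGR t ht0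
        _ = R * t⁻¹ := by ring
    have hval : ∫ t in Set.Ioc R T, R * t⁻¹ = R * (Real.log T - Real.log R) := by
      rw [← intervalIntegral.integral_of_le hRT, intervalIntegral.integral_const_mul,
          integral_inv (by
            rw [Set.uIcc_of_le hRT]
            intro h
            exact absurd h.1 (by linarith)),
          Real.log_div hT0.ne' hR0.ne']
    linarith
  have hB3 : ∫ t in Set.Ioi T, G t ≤ R := by
    have hle : ∫ t in Set.Ioi T, G t ≤ ∫ t in Set.Ioi T, S * t ^ (-2:ℝ) := by
      refine setIntegral_mono_on hint_IoiT hdom_int measurableSet_Ioi fun t ht => ?_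
      have ht0 : 0 < t := lt_trans hT0 ht
      rw [hdom_eq t ht0]
      exact hGS t ht0
    have hval : ∫ t in Set.Ioi T, S * t ^ (-2:ℝ) = R := by
      rw [MeasureTheory.integral_const_mul, integral_Ioi_rpow_of_lt (by norm_num) hT0]
      rw [hTdef]
      rw [show (-2:ℝ) + 1 = -1 by norm_num, Real.rpow_neg_one]
      field_simp
    linarith
  -- main inequality: m ≤ R * (2 + log(S/R^2))
  have hmain : m ≤ R * (2 + Real.log S - 2 * Real.log R) := by
    have := hlayer
    rw [hsplit] at this
    have hlogT : Real.log T = Real.log S - Real.log R := Real.log_div hS0.ne' hR0.ne'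
    rw [hlogT] at hB2
    have hring : R * (2 + Real.log S - 2 * Real.log R)
        = R + R * (Real.log S - Real.log R - Real.log R) + R := by ring
    linarith
  -- endgame
  set L := Real.log (1 + σ2 / m ^ 2) with hLdef
  have hL0 : 0 ≤ L := Real.log_nonneg (le_add_of_nonneg_right (by positivity))
  have hlogS : Real.log S = 2 * Real.log m + L := by
    have hSalt : S = m ^ 2 * (1 + σ2 / m ^ 2) := by field_simp [hSdef]; ring
    rw [hSalt, Real.log_mul (by positivity) (by positivity), Real.log_pow, hLdef]
    push_cast; ring
  set r := R / m with hrdef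
  have hrpos : 0 < r := div_pos hR0 hm
  have hr1 : r ≤ 1 := (div_le_one hm).mpr hRm
  have hlogR : Real.log R = Real.log m + Real.log r := by
    rw [hrdef, Real.log_div hR0.ne' hm.ne']; ring
  have hkey : 1 ≤ r * (2 + L - 2 * Real.log r) := by
    have hRr : R = m * r := by rw [hrdef]; field_simp
    have hident : R * (2 + Real.log S - 2 * Real.log R)
        = m * (r * (2 + L - 2 * Real.log r)) := by
      rw [hlogS, hlogR, hRr]; ring
    have h1 : m * 1 ≤ m * (r * (2 + L - 2 * Real.log r)) := by
      rw [← hident]; linarith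
    exact le_of_mul_le_mul_left h1 hm
  set r0 := (6 + 2 * L)⁻¹ with hr0def
  have h6L : (0:ℝ) < 6 + 2 * L := by linarith
  have hr0pos : 0 < r0 := by positivity
  have hr0lt1 : r0 < 1 := by
    rw [hr0def]
    exact inv_lt_one_of_one_lt₀ (by linarith)
  have hlogr0 : Real.log r0 = - Real.log (6 + 2 * L) := by rw [hr0def, Real.log_inv]
  clear hGmeas hG1 hGnn hGR hGS hlayer hint_IocT hint_Ioc0R hint_IocRT hdom_int
    hdom_eq hint_IoiT hsplit hB1 hinv_int hB2 hB3 hbdd hle_R markov1 heq h1int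
    hsq_int hsq hae hIio hmain hGdef G
  clear_value R S T L r r0
  have hclaimA : r0 * (2 + L - 2 * Real.log r0) ≤ 1 := by
    have hexp : 6 + 2 * L ≤ Real.exp (2 + L / 2) := by
      have h1 : Real.exp (2 + L / 2) = Real.exp 1 * Real.exp 1 * Real.exp (L / 2) := by
        rw [← Real.exp_add, ← Real.exp_add]; ring_nf
      have h2 : (2.7:ℝ) ≤ Real.exp 1 := by
        have := Real.exp_one_gt_d9; linarith
      have h4 : 1 + L / 2 ≤ Real.exp (L / 2) := by
        have := Real.add_one_le_exp (L / 2); linarith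
      have h5 : (7.29:ℝ) ≤ Real.exp 1 * Real.exp 1 := by nlinarith
      have h6 : (7.29:ℝ) * (1 + L / 2) ≤ Real.exp 1 * Real.exp 1 * Real.exp (L / 2) := by
        nlinarith [Real.exp_pos (L / 2)]
      nlinarith
    have hlog : Real.log (6 + 2 * L) ≤ 2 + L / 2 :=
      (Real.log_le_log h6L hexp).trans_eq (Real.log_exp _)
    have hstep : 2 + L - 2 * Real.log r0 ≤ 6 + 2 * L := by
      rw [hlogr0]; linarith
    calc r0 * (2 + L - 2 * Real.log r0) ≤ r0 * (6 + 2 * L) :=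
          mul_le_mul_of_nonneg_left hstep hr0pos.le
      _ = 1 := by rw [hr0def]; exact inv_mul_cancel₀ h6L.ne'
  have hderiv : ∀ x : ℝ, 0 < x →
      HasDerivAt (fun x : ℝ => x * (2 + L - 2 * Real.log x)) (L - 2 * Real.log x) x := by
    intro x hx0
    have h1 : HasDerivAt (fun x : ℝ => x * (2 + L)) (2 + L) x := by
      simpa using (hasDerivAt_id x).mul_const (2 + L)
    have h2 : HasDerivAt (fun x : ℝ => x * Real.log x) (Real.log x + 1) x :=
      Real.hasDerivAt_mul_log hx0.ne'
    have h3 := h1.sub (h2.const_mul 2)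
    have hfe : (fun x : ℝ => x * (2 + L - 2 * Real.log x))
        = fun x : ℝ => x * (2 + L) - 2 * (x * Real.log x) := by
      funext y; ring
    rw [hfe]
    exact h3.congr_deriv (by ring)
  have hr0r : r0 ≤ r := by
    by_contra hcon
    push_neg at hcon
    have hmono : StrictMonoOn (fun x : ℝ => x * (2 + L - 2 * Real.log x)) (Set.Icc r 1) := by
      refine strictMonoOn_of_deriv_pos (convex_Icc _ _) ?_ ?_
      · intro x hx
        have hx0 : 0 < x := lt_of_lt_of_le hrpos hx.1
        exact (hderiv x hx0).continuousAt.continuousWithinAt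
      · intro x hx
        rw [interior_Icc] at hx
        have hx0 : 0 < x := lt_trans hrpos hx.1
        rw [(hderiv x hx0).deriv]
        have hlt : Real.log x < 0 := Real.log_neg hx0 hx.2
        linarith
    have h1 : r ∈ Set.Icc r 1 := ⟨le_rfl, hr1⟩
    have h2 : r0 ∈ Set.Icc r 1 := ⟨hcon.le, hr0lt1.le⟩
    have hlt := hmono h1 h2 hcon
    simp only at hlt
    linarith
  have hfin : m * r0 ≤ m * r := mul_le_mul_of_nonneg_left hr0r hm.le
  show m * r0 ≤ R
  calc m * r0 ≤ m * r := hfin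
    _ = R := by rw [hrdef]; field_simp
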